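/- If C is an irreducible Kolmogorov matrix, then 0 is a simple eigenvalue of C (algebraic multiplicity one) and every other eigenvalue of C has strictly negative real part. -/

import Mathlib

open Matrix Polynomial

/-- A matrix is irreducible if there is no nontrivial subset `S` of indices with
`A i j = 0` for all `i ∈ S`, `j ∉ S`. -/
def MatIrreducible {n : ℕ} (A : Matrix (Fin n) (Fin n) ℝ) : Prop :=
  ¬ ∃ S : Set (Fin n), S.Nonempty ∧ Sᶜ.Nonempty ∧ ∀ i ∈ S, ∀ j ∉ S, A i j = 0

section DerivDet

variable {R : Type*} [CommRing R]

lemma polyDerivFinsetProd {ι : Type*} [DecidableEq ι] (s : Finset ι) (f : ι → R[X]) :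
    derivative (∏ i ∈ s, f i) =
      ∑ i ∈ s, (∏ j ∈ s.erase i, f j) * derivative (f i) := by
  induction s using Finset.induction_on with
  | empty => simp
  | @insert a s ha ih =>
    rw [Finset.prod_insert ha, derivative_mul, Finset.sum_insert ha,
      Finset.erase_insert ha, ih, Finset.mul_sum, mul_comm (derivative (f a))]
    congr 1
    refine Finset.sum_congr rfl fun i hi => ?_
    have hia : a ≠ i := fun h => ha (h ▸ hi)
    rw [Finset.erase_insert_of_ne hia,
      Finset.prod_insert (fun h => ha (Finset.mem_of_mem_erase h)), mul_assoc]

lemma derivative_det_eq {N : ℕ} (M : Matrix (Fin N) (Fin N) R[X]) :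
    derivative M.det =
      ∑ j, (M.updateCol j (fun k => derivative (M k j))).det := by
  classical
  simp only [Matrix.det_apply]
  rw [map_sum]
  simp_rw [Units.smul_def, map_zsmul, polyDerivFinsetProd, Finset.smul_sum]
  rw [Finset.sum_comm]
  refine Finset.sum_congr rfl fun j _ => Finset.sum_congr rfl fun σ _ => ?_
  congr 1
  rw [← Finset.prod_erase_mul _ _ (Finset.mem_univ j)]
  congr 1
  · exact Finset.prod_congr rfl fun i hi => by
      rw [Matrix.updateCol_apply, if_neg (Finset.ne_of_mem_erase hi)]
  · rw [Matrix.updateCol_apply, if_pos rfl]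

end DerivDet


lemma charpoly_eval_eq {N : ℕ} {R : Type*} [CommRing R] (B : Matrix (Fin N) (Fin N) R) (t : R) :
    B.charpoly.eval t = (Matrix.diagonal (fun _ => t) - B).det := by
  rw [Matrix.charpoly, show Polynomial.eval t (charmatrix B).det
      = (evalRingHom t) (charmatrix B).det from rfl, RingHom.map_det]
  congr 1
  ext i j
  by_cases h : i = j
  · subst h; simp [charmatrix_apply_eq]
  · simp [charmatrix_apply_ne _ _ _ h, Matrix.diagonal_apply_ne _ h]

lemma det_updateColumn_single {m : ℕ} {R : Type*} [CommRing R]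
    (A : Matrix (Fin (m+1)) (Fin (m+1)) R) (j : Fin (m+1)) :
    (A.updateCol j (Pi.single j 1)).det
      = (A.submatrix j.succAbove j.succAbove).det := by
  rw [Matrix.det_succ_column _ j, Finset.sum_eq_single j]
  · rw [Matrix.updateCol_apply, if_pos rfl, Pi.single_eq_same]
    have hsub : (A.updateCol j (Pi.single j 1)).submatrix j.succAbove j.succAbove
        = A.submatrix j.succAbove j.succAbove := by
      ext a b
      rw [Matrix.submatrix_apply, Matrix.submatrix_apply, Matrix.updateCol_apply,
        if_neg (Fin.succAbove_ne j b)]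
    rw [hsub]
    have : ((-1 : R)) ^ ((j : ℕ) + (j : ℕ)) = 1 := by
      rw [← two_mul, pow_mul, neg_one_sq, one_pow]
    rw [this, one_mul, one_mul]
  · intro i _ hij
    rw [Matrix.updateCol_apply, if_pos rfl, Pi.single_eq_of_ne hij, mul_zero, zero_mul]
  · intro h; exact absurd (Finset.mem_univ j) h

lemma charpoly_deriv_eval_zero {m : ℕ} (A : Matrix (Fin (m+1)) (Fin (m+1)) ℝ) :
    (derivative A.charpoly).eval 0
      = ∑ j : Fin (m+1), ((-A).submatrix (Fin.succAbove j) (Fin.succAbove j)).det := by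
  rw [Matrix.charpoly, derivative_det_eq]
  rw [show Polynomial.eval (0:ℝ) = (evalRingHom 0 : ℝ[X] →+* ℝ) from rfl, map_sum]
  refine Finset.sum_congr rfl fun j _ => ?_
  rw [RingHom.map_det, RingHom.mapMatrix_apply]
  rw [show ((charmatrix A).updateCol j fun k => derivative (charmatrix A k j)).map
        (evalRingHom 0)
      = (-A).updateCol j (Pi.single j 1) from ?_]
  · exact det_updateColumn_single (-A) j
  · ext a b
    rw [Matrix.map_apply, Matrix.updateCol_apply, Matrix.updateCol_apply]
    by_cases hb : b = j
    · subst hb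
      rw [if_pos rfl, if_pos rfl]
      by_cases hab : a = b
      · subst hab
        simp [charmatrix_apply_eq]
      · simp [charmatrix_apply_ne _ _ _ hab, Pi.single_eq_of_ne hab]
    · rw [if_neg hb, if_neg hb]
      by_cases hab : a = b
      · subst hab
        simp [charmatrix_apply_eq]
      · simp [charmatrix_apply_ne _ _ _ hab]


lemma minor_no_nonneg_eigen {m : ℕ} (C : Matrix (Fin (m+1)) (Fin (m+1)) ℝ)
    (hoff : ∀ i j, i ≠ j → 0 ≤ C i j)
    (hcol : ∀ j, ∑ i, C i j = 0)
    (hirr : MatIrreducible C) (i : Fin (m+1)) (t : ℝ) (ht : 0 ≤ t)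
    (v : Fin m → ℝ)
    (hv : ∀ j, ∑ k, C (i.succAbove k) (i.succAbove j) * v k = t * v j) :
    v = 0 := by
  by_contra hv0
  obtain ⟨k0, hk0⟩ : ∃ k, v k ≠ 0 := by
    by_contra h; push_neg at h; exact hv0 (funext h)
  obtain ⟨j0, -, hj0⟩ := Finset.exists_max_image Finset.univ (fun k => |v k|)
    ⟨k0, Finset.mem_univ k0⟩
  set m0 := |v j0| with hm0def
  have hj0' : ∀ k, |v k| ≤ m0 := fun k => hj0 k (Finset.mem_univ k)
  have hm0 : 0 < m0 := lt_of_lt_of_le (abs_pos.mpr hk0) (hj0' k0)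
  set S : Set (Fin (m+1)) := {a | ∃ k, i.succAbove k = a ∧ |v k| = m0} with hS
  have hdiag : ∀ b, C b b ≤ 0 := by
    intro b
    have h1 := hcol b
    rw [← Finset.add_sum_erase _ _ (Finset.mem_univ b)] at h1
    have h2 : 0 ≤ ∑ a ∈ Finset.univ.erase b, C a b :=
      Finset.sum_nonneg fun a ha => hoff a b (Finset.ne_of_mem_erase ha)
    linarith
  have key : ∀ j : Fin m, |v j| = m0 → ∀ a, a ∉ S → C a (i.succAbove j) = 0 := by
    intro j hj
    set b := i.succAbove j with hb
    have hbne : ∀ k : Fin m, k ≠ j → i.succAbove k ≠ b := by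
      intro k hk h
      exact hk (Fin.succAbove_right_injective h)
    have hib : i ≠ b := (Fin.succAbove_ne i j).symm
    have heq : (t - C b b) * v j = ∑ k ∈ Finset.univ.erase j, C (i.succAbove k) b * v k := by
      have hvj := hv j
      rw [← Finset.add_sum_erase _ (fun k => C (i.succAbove k) b * v k)
        (Finset.mem_univ j)] at hvj
      rw [← hb] at hvj
      ring_nf
      ring_nf at hvj
      linarith
    have habs : (t - C b b) * m0 ≤ ∑ k ∈ Finset.univ.erase j, C (i.succAbove k) b * |v k| := by
      have h1 : (t - C b b) * m0 = |(t - C b b) * v j| := by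
        rw [abs_mul, abs_of_nonneg (by linarith [hdiag b] : (0:ℝ) ≤ t - C b b), hj]
      rw [h1, heq]
      refine (Finset.abs_sum_le_sum_abs _ _).trans (le_of_eq ?_)
      refine Finset.sum_congr rfl fun k hk => ?_
      rw [abs_mul, abs_of_nonneg (hoff _ _ (hbne k (Finset.ne_of_mem_erase hk)))]
    have hsum : ∑ k ∈ Finset.univ.erase j, C (i.succAbove k) b = -C b b - C i b := by
      have h1 := hcol b
      rw [Fin.sum_univ_succAbove (fun a => C a b) i,
        ← Finset.add_sum_erase _ (fun k => C (i.succAbove k) b) (Finset.mem_univ j),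
        ← hb] at h1
      linarith
    have hterm : ∀ k ∈ Finset.univ.erase j, 0 ≤ C (i.succAbove k) b * (m0 - |v k|) := by
      intro k hk
      exact mul_nonneg (hoff _ _ (hbne k (Finset.ne_of_mem_erase hk)))
        (by linarith [hj0' k])
    have hexp : ∑ k ∈ Finset.univ.erase j, C (i.succAbove k) b * (m0 - |v k|)
        = (∑ k ∈ Finset.univ.erase j, C (i.succAbove k) b) * m0
          - ∑ k ∈ Finset.univ.erase j, C (i.succAbove k) b * |v k| := by
      rw [Finset.sum_mul, ← Finset.sum_sub_distrib]
      exact Finset.sum_congr rfl fun k _ => by ring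
    have hCib : 0 ≤ C i b := hoff i b hib
    have hsumnn : 0 ≤ ∑ k ∈ Finset.univ.erase j, C (i.succAbove k) b * (m0 - |v k|) :=
      Finset.sum_nonneg hterm
    have hzero : ∑ k ∈ Finset.univ.erase j, C (i.succAbove k) b * (m0 - |v k|) = 0 := by
      rw [hexp, hsum]
      nlinarith [habs]
    have hCib0 : C i b = 0 := by
      rw [hexp, hsum] at hzero
      nlinarith [habs]
    have hptwise := (Finset.sum_eq_zero_iff_of_nonneg hterm).mp hzero
    intro a ha
    by_cases hai : a = i
    · subst hai; exact hCib0
    obtain ⟨k, hk⟩ := Fin.exists_succAbove_eq hai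
    by_cases hkj : k = j
    · exact absurd (⟨j, by rw [← hk, hkj], hj⟩ : a ∈ S) ha
    · have hk' := hptwise k (Finset.mem_erase.mpr ⟨hkj, Finset.mem_univ k⟩)
      rw [hk] at hk'
      rcases mul_eq_zero.mp hk' with h | h
      · exact h
      · exact absurd (⟨k, hk, by linarith⟩ : a ∈ S) ha
  refine hirr ⟨Sᶜ, ⟨i, fun hiS => ?_⟩, ?_, ?_⟩
  · obtain ⟨k, hk, -⟩ := hiS
    exact Fin.succAbove_ne i k hk
  · rw [compl_compl]
    exact ⟨i.succAbove j0, j0, rfl, rfl⟩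
  · intro x hx y hy
    obtain ⟨k, hk, hkm⟩ := Set.not_notMem.mp hy
    rw [← hk]
    exact key k hkm x hx


lemma minor_det_pos {m : ℕ} (C : Matrix (Fin (m+1)) (Fin (m+1)) ℝ)
    (hoff : ∀ i j, i ≠ j → 0 ≤ C i j)
    (hcol : ∀ j, ∑ i, C i j = 0)
    (hirr : MatIrreducible C) (i : Fin (m+1)) :
    0 < ((-C).submatrix (Fin.succAbove i) (Fin.succAbove i)).det := by
  set B := C.submatrix (Fin.succAbove i) (Fin.succAbove i) with hB
  have hneg : ((-C).submatrix (Fin.succAbove i) (Fin.succAbove i)) = -B := by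
    ext a b; simp [hB]
  rw [hneg]
  have hg : ∀ t : ℝ, 0 ≤ t → B.charpoly.eval t ≠ 0 := by
    intro t ht h0
    rw [charpoly_eval_eq, ← Matrix.det_transpose] at h0
    obtain ⟨v, hv0, hv⟩ := Matrix.exists_mulVec_eq_zero_iff.mpr h0
    refine hv0 (minor_no_nonneg_eigen C hoff hcol hirr i t ht v ?_)
    intro j
    have h := congrFun hv j
    have h' : ∑ k, ((Matrix.diagonal (fun _ => t) - B).transpose j k) * v k = 0 := h
    have hd : ∑ k, (Matrix.diagonal (fun _ : Fin m => t)) k j * v k = t * v j := by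
      rw [Finset.sum_eq_single j]
      · rw [Matrix.diagonal_apply_eq]
      · intro k _ hkj
        rw [Matrix.diagonal_apply_ne _ hkj, zero_mul]
      · intro hj; exact absurd (Finset.mem_univ j) hj
    simp only [Matrix.transpose_apply, Matrix.sub_apply, sub_mul,
      Finset.sum_sub_distrib, hd] at h'
    have : ∀ k, B k j = C (i.succAbove k) (i.succAbove j) := fun k => rfl
    simp only [this] at h'
    linarith
  have h0ne := hg 0 le_rfl
  have hpos0 : 0 < B.charpoly.eval 0 := by
    rcases Nat.eq_zero_or_pos m with hm | hm
    · subst hm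
      rw [charpoly_eval_eq, Matrix.det_fin_zero]
      exact one_pos
    have hdeg : (0:ℕ) < B.charpoly.degree := by
      rw [Matrix.charpoly_degree_eq_dim]
      simp only [Fintype.card_fin]
      exact_mod_cast hm
    have htend : Filter.Tendsto (fun x => B.charpoly.eval x) Filter.atTop Filter.atTop :=
      Polynomial.tendsto_atTop_of_leadingCoeff_nonneg _ (by exact_mod_cast hdeg)
        (by rw [(B.charpoly_monic).leadingCoeff]; norm_num)
    obtain ⟨t1, ht1a, ht1b⟩ :=
      ((htend.eventually_ge_atTop 1).and (Filter.eventually_ge_atTop (0:ℝ))).exists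
    by_contra hle
    push_neg at hle
    have hlt : B.charpoly.eval 0 < 0 := lt_of_le_of_ne hle h0ne
    have hcont : ContinuousOn (fun x => B.charpoly.eval x) (Set.Icc 0 t1) :=
      (B.charpoly.continuous).continuousOn
    have h0mem : (0:ℝ) ∈ Set.Icc (B.charpoly.eval 0) (B.charpoly.eval t1) :=
      ⟨le_of_lt hlt, by linarith⟩
    obtain ⟨x, hx, hx0⟩ := intermediate_value_Icc ht1b hcont h0mem
    exact hg x hx.1 hx0
  rw [charpoly_eval_eq] at hpos0
  simpa using hpos0

/-- If `C` is an irreducible Kolmogorov matrix, then `0` is a simple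
eigenvalue of `C` (algebraic multiplicity one) and every other eigenvalue has
strictly negative real part. -/
theorem irreducible_kolmogorov_zero_simple_dominant (n : ℕ) (hn : 0 < n)
    (C : Matrix (Fin n) (Fin n) ℝ)
    (hoff : ∀ i j, i ≠ j → 0 ≤ C i j)
    (hcol : ∀ j, ∑ i, C i j = 0)
    (hirr : MatIrreducible C) :
    (C.map (fun r => (r : ℂ))).charpoly.rootMultiplicity 0 = 1 ∧
    ∀ μ ∈ spectrum ℂ (C.map (fun r => (r : ℂ))), μ ≠ 0 → μ.re < 0 := by
  obtain ⟨m, rfl⟩ : ∃ m, n = m + 1 := ⟨n - 1, (Nat.succ_pred_eq_of_pos hn).symm⟩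
  set M := C.map (fun r => (r : ℂ)) with hM
  have hPmap : M.charpoly = C.charpoly.map (Complex.ofRealHom) :=
    Matrix.charpoly_map C Complex.ofRealHom
  have hdiag : ∀ b, C b b ≤ 0 := by
    intro b
    have h1 := hcol b
    rw [← Finset.add_sum_erase _ _ (Finset.mem_univ b)] at h1
    have h2 : 0 ≤ ∑ a ∈ Finset.univ.erase b, C a b :=
      Finset.sum_nonneg fun a ha => hoff a b (Finset.ne_of_mem_erase ha)
    linarith
  constructor
  · -- root multiplicity one
    have hdet : C.det = 0 := by
      rw [← Matrix.det_transpose, ← Matrix.exists_mulVec_eq_zero_iff]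
      refine ⟨fun _ => 1, fun h => by simpa using congrFun h 0, ?_⟩
      funext j
      show ∑ k, C.transpose j k * 1 = 0
      simp only [Matrix.transpose_apply, mul_one]
      exact hcol j
    have hc0 : C.charpoly.coeff 0 = 0 := by
      rw [Polynomial.coeff_zero_eq_eval_zero, charpoly_eval_eq]
      have : Matrix.diagonal (fun _ : Fin (m+1) => (0:ℝ)) - C = -C := by
        rw [Matrix.diagonal_zero, zero_sub]
      rw [this, Matrix.det_neg, hdet, mul_zero]
    have hc1 : 0 < C.charpoly.coeff 1 := by
      have hderiv : C.charpoly.coeff 1 = (derivative C.charpoly).eval 0 := by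
        rw [← Polynomial.coeff_zero_eq_eval_zero, Polynomial.coeff_derivative]
        push_cast
        ring
      rw [hderiv, charpoly_deriv_eval_zero]
      exact Finset.sum_pos (fun j _ => minor_det_pos C hoff hcol hirr j)
        ⟨0, Finset.mem_univ 0⟩
    have hPne : M.charpoly ≠ 0 := (M.charpoly_monic).ne_zero
    have hP0 : M.charpoly.coeff 0 = 0 := by
      rw [hPmap, Polynomial.coeff_map, hc0, map_zero]
    have hP1 : M.charpoly.coeff 1 ≠ 0 := by
      rw [hPmap, Polynomial.coeff_map]
      exact Complex.ofReal_ne_zero.mpr (ne_of_gt hc1)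
    have hle : M.charpoly.rootMultiplicity 0 ≤ 1 := by
      rw [Polynomial.rootMultiplicity_le_iff hPne]
      intro hdvd
      rw [Polynomial.C_0, sub_zero] at hdvd
      obtain ⟨q, hq⟩ := hdvd
      rw [hq, mul_comm, Polynomial.coeff_mul_X_pow'] at hP1
      simp at hP1
    have hge : 1 ≤ M.charpoly.rootMultiplicity 0 := by
      rw [Polynomial.le_rootMultiplicity_iff hPne, pow_one, Polynomial.C_0, sub_zero]
      exact Polynomial.X_dvd_iff.mpr hP0
    omega
  · -- spectrum
    intro μ hμ hμ0
    rw [spectrum.mem_iff] at hμ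
    have hdetμ : (Matrix.diagonal (fun _ : Fin (m+1) => μ) - M).det = 0 := by
      by_contra hne
      exact hμ <| by
        rw [Matrix.algebraMap_eq_diagonal]
        exact (Matrix.isUnit_iff_isUnit_det _).mpr (isUnit_iff_ne_zero.mpr hne)
    rw [← Matrix.det_transpose] at hdetμ
    obtain ⟨v, hv0, hv⟩ := Matrix.exists_mulVec_eq_zero_iff.mpr hdetμ
    have hrow : ∀ j, ∑ k, M k j * v k = μ * v j := by
      intro j
      have h := congrFun hv j
      have h' : ∑ k, ((Matrix.diagonal (fun _ => μ) - M).transpose j k) * v k = 0 := h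
      have hd : ∑ k, (Matrix.diagonal (fun _ : Fin (m+1) => μ)) k j * v k = μ * v j := by
        rw [Finset.sum_eq_single j]
        · rw [Matrix.diagonal_apply_eq]
        · intro k _ hkj
          rw [Matrix.diagonal_apply_ne _ hkj, zero_mul]
        · intro hj; exact absurd (Finset.mem_univ j) hj
      simp only [Matrix.transpose_apply, Matrix.sub_apply, sub_mul,
        Finset.sum_sub_distrib, hd] at h'
      exact (sub_eq_zero.mp h').symm
    obtain ⟨k0, hk0⟩ : ∃ k, v k ≠ 0 := by
      by_contra h; push_neg at h; exact hv0 (funext h)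
    obtain ⟨j0, -, hj0⟩ := Finset.exists_max_image Finset.univ
      (fun k => ‖v k‖) ⟨k0, Finset.mem_univ k0⟩
    set m0 := ‖v j0‖ with hm0def
    have hj0' : ∀ k, ‖v k‖ ≤ m0 := fun k => hj0 k (Finset.mem_univ k)
    have hm0 : 0 < m0 := lt_of_lt_of_le (by simpa using hk0) (hj0' k0)
    set c := C j0 j0 with hc
    have hcle : c ≤ 0 := hdiag j0
    have hMc : ∀ k, M k j0 = ((C k j0 : ℝ) : ℂ) := fun k => rfl
    have heq : (μ - (c:ℂ)) * v j0 = ∑ k ∈ Finset.univ.erase j0, M k j0 * v k := by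
      have h1 := hrow j0
      rw [← Finset.add_sum_erase _ (fun k => M k j0 * v k) (Finset.mem_univ j0)] at h1
      rw [hMc j0, ← hc] at h1
      linear_combination -h1
    have hsum : ∑ k ∈ Finset.univ.erase j0, C k j0 = -c := by
      have h1 := hcol j0
      rw [← Finset.add_sum_erase _ _ (Finset.mem_univ j0)] at h1
      linarith
    have habs : ‖μ - (c:ℂ)‖ * m0 ≤ (-c) * m0 := by
      have h1 : ‖μ - (c:ℂ)‖ * m0 = ‖(μ - (c:ℂ)) * v j0‖ := by
        rw [norm_mul]
      rw [h1, heq]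
      refine (norm_sum_le _ _).trans ?_
      rw [← hsum, Finset.sum_mul]
      refine Finset.sum_le_sum fun k hk => ?_
      rw [hMc k, norm_mul, Complex.norm_real, Real.norm_eq_abs,
        abs_of_nonneg (hoff k j0 (Finset.ne_of_mem_erase hk))]
      exact mul_le_mul_of_nonneg_left (hj0' k) (hoff k j0 (Finset.ne_of_mem_erase hk))
    have habs' : ‖μ - (c:ℂ)‖ ≤ -c :=
      le_of_mul_le_mul_right (by simpa using habs) hm0
    have hsq : (μ.re - c)^2 + μ.im^2 ≤ c^2 := by
      have h1 : ‖μ - (c:ℂ)‖ ^ 2 ≤ (-c)^2 := by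
        have := norm_nonneg (μ - (c:ℂ))
        nlinarith
      rw [Complex.sq_norm, Complex.normSq_apply, Complex.sub_re, Complex.sub_im,
        Complex.ofReal_re, Complex.ofReal_im] at h1
      nlinarith [h1]
    by_contra hre
    push_neg at hre
    have hre0 : μ.re = 0 := by nlinarith
    have him0 : μ.im = 0 := by nlinarith
    exact hμ0 (Complex.ext hre0 him0)
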